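/- If S is a subset of the symmetric group S_n that is closed under conjugation and does not contain the identity, then every eigenvalue of the Cayley graph Γ(S_n, S) is an integer. -/

import Mathlib

open Finset Nat in
private lemma stmt6_isConj_pow_self' {n : ℕ} (σ : Equiv.Perm (Fin n)) {k : ℕ}
    (hk : Nat.Coprime k (n !)) : IsConj (σ ^ k) σ := by
  rw [Equiv.Perm.isConj_iff_cycleType_eq]
  induction σ using Equiv.Perm.cycle_induction_on with
  | base_one => simp
  | base_cycles c hc =>
    have hord : orderOf c ∣ n ! := by
      have := orderOf_dvd_card (x := c)
      rwa [Fintype.card_perm, Fintype.card_fin] at this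
    have hk' : Nat.Coprime k (orderOf c) := Nat.Coprime.coprime_dvd_right hord hk
    have hcyc : (c ^ k).IsCycle := hc.pow_iff.mpr hk'
    rw [hcyc.cycleType, hc.cycleType, Equiv.Perm.support_pow_coprime hk']
  | induction_disjoint σ τ hd hc ih1 ih2 =>
    have hd' : (σ ^ k).Disjoint (τ ^ k) := by
      rw [Equiv.Perm.disjoint_iff_disjoint_support] at hd ⊢
      exact hd.mono (Equiv.Perm.support_pow_le σ k) (Equiv.Perm.support_pow_le τ k)
    rw [hd.commute.mul_pow, hd'.cycleType_mul, hd.cycleType_mul, ih1, ih2]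

open Finset in
private lemma stmt6_trace_pow_eq {V : Type} [AddCommGroup V] [Module ℂ V]
    [FiniteDimensional ℂ V]
    (f : Module.End ℂ V) {m : ℕ} (hm : 0 < m) (hf : f ^ m = 1) {ζ : ℂ}
    (hζ : IsPrimitiveRoot ζ m) :
    ∃ c : ℕ → ℕ, ∀ k : ℕ,
      LinearMap.trace ℂ V (f ^ k) = ∑ j ∈ range m, (c j : ℂ) * ζ ^ (j * k) := by
  have hmC : (m : ℂ) ≠ 0 := Nat.cast_ne_zero.mpr hm.ne'
  set P : ℕ → Module.End ℂ V :=
    fun j => (m : ℂ)⁻¹ • ∑ i ∈ range m, (ζ⁻¹ ^ (j * i)) • f ^ i with hP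
  have hζζ : ∀ a : ℕ, ζ ^ a * ζ⁻¹ ^ a = 1 := by
    intro a
    rw [← mul_pow, mul_inv_cancel₀ (hζ.ne_zero hm.ne'), one_pow]
  have hζζ' : ∀ a : ℕ, ζ⁻¹ ^ a * ζ ^ a = 1 := fun a => by rw [mul_comm, hζζ]
  have key1 : ∀ j, f * P j = ζ ^ j • P j := by
    intro j
    have hcomm : ∀ i, f * (ζ⁻¹ ^ (j * i) • f ^ i) = ζ ^ j • (ζ⁻¹ ^ (j * (i+1))) • f ^ (i+1) := by
      intro i
      rw [mul_smul_comm, smul_smul, ← pow_succ']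
      congr 1
      rw [Nat.mul_add, Nat.mul_one, pow_add, mul_comm (ζ⁻¹ ^ (j*i)) (ζ⁻¹ ^ j), ← mul_assoc,
        hζζ j, one_mul]
    have main : f * (∑ i ∈ range m, ζ⁻¹ ^ (j * i) • f ^ i)
        = ζ ^ j • ∑ i ∈ range m, ζ⁻¹ ^ (j * i) • f ^ i := by
      calc f * ∑ i ∈ range m, ζ⁻¹ ^ (j * i) • f ^ i
          = ∑ i ∈ range m, ζ ^ j • (ζ⁻¹ ^ (j * (i+1))) • f ^ (i+1) := by
            rw [Finset.mul_sum]; exact Finset.sum_congr rfl fun i _ => hcomm i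
        _ = ζ ^ j • ∑ i ∈ range m, (ζ⁻¹ ^ (j * (i+1))) • f ^ (i+1) := by
            rw [Finset.smul_sum]
        _ = ζ ^ j • ∑ i ∈ range m, (ζ⁻¹ ^ (j * i)) • f ^ i := by
            congr 1
            have h1 := Finset.sum_range_succ (fun i => (ζ⁻¹ ^ (j * i)) • f ^ i) m
            have h2 := Finset.sum_range_succ' (fun i => (ζ⁻¹ ^ (j * i)) • f ^ i) m
            have hQm : (ζ⁻¹ ^ (j * m)) • f ^ m = (ζ⁻¹ ^ (j * 0)) • f ^ 0 := by
              rw [hf, Nat.mul_zero, pow_zero, pow_zero, Nat.mul_comm, pow_mul,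
                hζ.inv.pow_eq_one, one_pow]
            rw [h1, hQm] at h2
            exact (add_right_cancel h2.symm)
    rw [hP]
    simp only []
    rw [mul_smul_comm, main, smul_comm]
  have keyk : ∀ j k, f ^ k * P j = (ζ ^ (j * k)) • P j := by
    intro j k
    induction k with
    | zero => simp
    | succ k ih =>
      rw [pow_succ, mul_assoc, key1, mul_smul_comm, ih, smul_smul, ← pow_add,
        Nat.mul_add, Nat.mul_one, Nat.add_comm]
  have hsum1 : ∑ j ∈ range m, P j = 1 := by
    rw [hP]
    simp only [← Finset.smul_sum]
    rw [Finset.sum_comm]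
    have : ∀ i ∈ range m,
        (∑ j ∈ range m, ζ⁻¹ ^ (j * i) • f ^ i) = (∑ j ∈ range m, (ζ⁻¹ ^ i) ^ j) • f ^ i := by
      intro i _
      rw [Finset.sum_smul]
      exact Finset.sum_congr rfl fun j _ => by rw [← pow_mul, Nat.mul_comm]
    rw [Finset.sum_congr rfl this]
    rw [Finset.sum_eq_single 0 ?h₀ ?h₁]
    · simp only [pow_zero]
      rw [Finset.sum_congr rfl (fun j _ => one_pow j), Finset.sum_const, card_range,
        nsmul_eq_mul, mul_one, smul_smul, inv_mul_cancel₀ hmC, one_smul]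
    case h₀ =>
      intro i hi hi0
      have hne : ζ⁻¹ ^ i ≠ 1 :=
        hζ.inv.pow_ne_one_of_pos_of_lt hi0 (mem_range.mp hi)
      have hgeom : (∑ j ∈ range m, (ζ⁻¹ ^ i) ^ j) = 0 := by
        have h := geom_sum_mul (ζ⁻¹ ^ i) m
        rw [← pow_mul, Nat.mul_comm, pow_mul, hζ.inv.pow_eq_one, one_pow, sub_self] at h
        rcases mul_eq_zero.mp h with h' | h'
        · exact h'
        · exact absurd (sub_eq_zero.mp h') hne
      rw [hgeom, zero_smul]
    case h₁ => intro h; exact absurd (mem_range.mpr hm) h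
  have hidem : ∀ j, P j * P j = P j := by
    intro j
    have this1 : ∀ i ∈ range m, (ζ⁻¹ ^ (j * i) • f ^ i) * P j = P j := by
      intro i _
      rw [smul_mul_assoc, keyk j i, smul_smul, Nat.mul_comm j i, hζζ' (i * j), one_smul]
    conv_lhs => rw [hP]
    simp only []
    rw [smul_mul_assoc, Finset.sum_mul, Finset.sum_congr rfl this1, Finset.sum_const,
      card_range, ← Nat.cast_smul_eq_nsmul ℂ, smul_smul, inv_mul_cancel₀ hmC, one_smul]
  have htr : ∀ j, LinearMap.trace ℂ V (P j)
      = (Module.finrank ℂ (LinearMap.range (P j)) : ℂ) := by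
    intro j
    have hproj : LinearMap.IsProj (LinearMap.range (P j)) (P j) := by
      refine ⟨fun x => LinearMap.mem_range_self _ x, ?_⟩
      rintro x ⟨y, rfl⟩
      rw [← Module.End.mul_apply, hidem j]
    exact hproj.trace
  refine ⟨fun j => Module.finrank ℂ (LinearMap.range (P j)), fun k => ?_⟩
  have hfk : f ^ k = ∑ j ∈ range m, ζ ^ (j * k) • P j := by
    conv_lhs => rw [← mul_one (f ^ k), ← hsum1]
    rw [Finset.mul_sum]
    exact Finset.sum_congr rfl fun j _ => keyk j k
  rw [hfk, map_sum]
  refine Finset.sum_congr rfl fun j _ => ?_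
  rw [map_smul, smul_eq_mul, htr j, mul_comm]


open Finset Nat in
theorem stmt_6 (n : ℕ) (S : Finset (Equiv.Perm (Fin n)))
    (hid : (1 : Equiv.Perm (Fin n)) ∉ S)
    (hconj : ∀ g s : Equiv.Perm (Fin n), s ∈ S → g⁻¹ * s * g ∈ S)
    (μ : ℂ)
    (hμ : ∃ v : Equiv.Perm (Fin n) → ℂ, v ≠ 0 ∧
      (Matrix.of fun x y : Equiv.Perm (Fin n) =>
        if y * x⁻¹ ∈ S then (1 : ℂ) else 0).mulVec v = μ • v) :
    ∃ z : ℤ, μ = z := by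
  classical
  obtain ⟨v, hv0, hveq⟩ := hμ
  set A : Matrix (Equiv.Perm (Fin n)) (Equiv.Perm (Fin n)) ℂ :=
    Matrix.of (fun x y : Equiv.Perm (Fin n) => if y * x⁻¹ ∈ S then (1 : ℂ) else 0) with hA
  set m : ℕ := n ! with hm
  have hmpos : 0 < m := Nat.factorial_pos n
  -- action of A as a sum of translations
  have hAct : ∀ (w : Equiv.Perm (Fin n) → ℂ) (x : Equiv.Perm (Fin n)),
      A.mulVec w x = ∑ s ∈ S, w (s * x) := by
    intro w x
    show (∑ y : Equiv.Perm (Fin n), A x y * w y) = _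
    have h1 : ∀ y : Equiv.Perm (Fin n), A x y * w y = if y * x⁻¹ ∈ S then w y else 0 := by
      intro y; rw [hA]; simp only [Matrix.of_apply, ite_mul, one_mul, zero_mul]
    rw [Finset.sum_congr rfl fun y _ => h1 y]
    rw [← Equiv.sum_comp (Equiv.mulRight x) (fun y => if y * x⁻¹ ∈ S then w y else 0)]
    have h2 : ∀ z : Equiv.Perm (Fin n),
        (if (Equiv.mulRight x z) * x⁻¹ ∈ S then w (Equiv.mulRight x z) else 0)
          = if z ∈ S then w (z * x) else 0 := by
      intro z
      simp only [Equiv.coe_mulRight, mul_inv_cancel_right]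
    rw [Finset.sum_congr rfl fun z _ => h2 z, Finset.sum_ite_mem, Finset.univ_inter]
  -- closure properties of S
  have hconjS : ∀ s ∈ S, ∀ t, IsConj t s → t ∈ S := by
    intro s hs t ht
    obtain ⟨cc, hcc⟩ := isConj_iff.mp ht
    have h := hconj cc s hs
    have ht' : t = cc⁻¹ * s * cc := by rw [← hcc]; group
    rw [ht']
    exact h
  have hpowS : ∀ (k : ℕ), Nat.Coprime k m → ∀ s ∈ S, s ^ k ∈ S := by
    intro k hk s hs
    exact hconjS s hs _ (stmt6_isConj_pow_self' s hk)
  -- summation bijection s ↦ s ^ k on S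
  have hbij : ∀ (k : ℕ), Nat.Coprime k m → ∀ (F : Equiv.Perm (Fin n) → ℂ),
      ∑ s ∈ S, F (s ^ k) = ∑ s ∈ S, F s := by
    intro k hk F
    have hcard : (Nat.card (Equiv.Perm (Fin n))).Coprime k := by
      rw [Nat.card_eq_fintype_card, Fintype.card_perm, Fintype.card_fin]
      exact hk.symm
    have hsymm_pow : ∀ t, ((powCoprime hcard).symm t) ^ k = t := by
      intro t
      have := (powCoprime hcard).apply_symm_apply t
      rwa [powCoprime_apply] at this
    refine Finset.sum_nbij' (fun s => s ^ k) (fun t => (powCoprime hcard).symm t)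
      (fun s hs => hpowS k hk s hs) ?_ ?_ ?_ (fun s _ => rfl)
    · intro t ht
      refine hconjS t ht _ ?_
      have h1 : IsConj (((powCoprime hcard).symm t) ^ k) ((powCoprime hcard).symm t) :=
        stmt6_isConj_pow_self' _ hk
      rw [hsymm_pow t] at h1
      exact h1.symm
    · intro s _
      show (powCoprime hcard).symm (s ^ k) = s
      have h3 : powCoprime hcard s = s ^ k := powCoprime_apply hcard s
      rw [← h3, Equiv.symm_apply_apply]
    · intro t _
      exact hsymm_pow t
  -- the representation by left translations
  set ρ : Equiv.Perm (Fin n) → Module.End ℂ (Equiv.Perm (Fin n) → ℂ) :=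
    fun g => { toFun := fun w => fun x => w (g⁻¹ * x),
               map_add' := fun _ _ => rfl,
               map_smul' := fun _ _ => rfl } with hρ
  have hρ_apply : ∀ g w x, ρ g w x = w (g⁻¹ * x) := fun _ _ _ => rfl
  have hρ_mul : ∀ g h, ρ g * ρ h = ρ (g * h) := by
    intro g h
    refine LinearMap.ext fun w => funext fun x => ?_
    show w (h⁻¹ * (g⁻¹ * x)) = w ((g * h)⁻¹ * x)
    rw [mul_inv_rev, mul_assoc]
  have hρ_one : ρ 1 = 1 := by
    refine LinearMap.ext fun w => funext fun x => ?_
    show w (1⁻¹ * x) = w x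
    rw [inv_one, one_mul]
  -- A commutes with each ρ g
  have hswap : ∀ (g : Equiv.Perm (Fin n)) (w : Equiv.Perm (Fin n) → ℂ) (x : Equiv.Perm (Fin n)),
      ∑ s ∈ S, w (g⁻¹ * (s * x)) = ∑ s ∈ S, w (s * (g⁻¹ * x)) := by
    intro g w x
    refine Finset.sum_nbij' (fun s => g⁻¹ * s * g) (fun s => g * s * g⁻¹)
      (fun s hs => hconj g s hs) ?_ ?_ ?_ ?_
    · intro t ht
      have h := hconj g⁻¹ t ht
      rwa [inv_inv] at h
    · intro s _; group
    · intro t _; group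
    · intro s _
      congr 1
      group
  -- the eigenspace as an invariant subspace
  set L : Module.End ℂ (Equiv.Perm (Fin n) → ℂ) := Matrix.mulVecLin A with hL
  set V : Submodule ℂ (Equiv.Perm (Fin n) → ℂ) := Module.End.eigenspace L μ with hV
  have hmemV : ∀ w, w ∈ V ↔ A.mulVec w = μ • w := by
    intro w
    rw [hV, Module.End.mem_eigenspace_iff, hL, Matrix.mulVecLin_apply]
  have hvV : v ∈ V := (hmemV v).mpr hveq
  have hmaps : ∀ g, ∀ u ∈ V, ρ g u ∈ V := by
    intro g u hu
    rw [hmemV] at hu ⊢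
    funext x
    rw [hAct]
    have h1 : ∀ s, (ρ g u) (s * x) = u (g⁻¹ * (s * x)) := fun s => rfl
    rw [Finset.sum_congr rfl fun s _ => h1 s, hswap g u x]
    have h2 : (∑ s ∈ S, u (s * (g⁻¹ * x))) = A.mulVec u (g⁻¹ * x) := (hAct u (g⁻¹ * x)).symm
    rw [h2, hu]
    rfl
  -- restricted operators on V
  set fV : Equiv.Perm (Fin n) → Module.End ℂ V := fun g => (ρ g).restrict (hmaps g) with hfV
  have hfV_apply : ∀ g (u : V), ((fV g u : Equiv.Perm (Fin n) → ℂ)) = ρ g (u : _) :=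
    fun g u => rfl
  have hfV_mul : ∀ g h, fV g * fV h = fV (g * h) := by
    intro g h
    refine LinearMap.ext fun u => Subtype.ext ?_
    show (ρ g (ρ h (u : _))) = ρ (g * h) (u : _)
    rw [← hρ_mul g h]
    rfl
  have hfV_one : fV 1 = 1 := by
    refine LinearMap.ext fun u => Subtype.ext ?_
    show ρ 1 (u : _) = (u : _)
    rw [hρ_one]
    rfl
  have hfV_pow : ∀ g (k : ℕ), fV g ^ k = fV (g ^ k) := by
    intro g k
    induction k with
    | zero => rw [pow_zero, pow_zero, hfV_one]
    | succ k ih => rw [pow_succ, pow_succ, ih, hfV_mul]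
  have hfV_m : ∀ g, fV g ^ m = 1 := by
    intro g
    have hg : g ^ m = 1 := by
      have hg' : g ^ Fintype.card (Equiv.Perm (Fin n)) = 1 := pow_card_eq_one
      rwa [Fintype.card_perm, Fintype.card_fin, ← hm] at hg'
    rw [hfV_pow, hg, hfV_one]
  -- the cyclotomic field
  set m' : ℕ+ := ⟨m, hmpos⟩ with hm'
  haveI hNZQ : NeZero ((m' : ℕ) : ℚ) := ⟨by exact_mod_cast hmpos.ne'⟩
  set K : Type := CyclotomicField m' ℚ with hK
  haveI : IsCyclotomicExtension {(m' : ℕ)} ℚ K := CyclotomicField.isCyclotomicExtension m' ℚ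
  haveI : FiniteDimensional ℚ K := IsCyclotomicExtension.finiteDimensional {(m' : ℕ)} ℚ K
  haveI : IsGalois ℚ K := IsCyclotomicExtension.isGalois {(m' : ℕ)} ℚ K
  set ζK : K := IsCyclotomicExtension.zeta m' ℚ K with hζK_def
  have hζK : IsPrimitiveRoot ζK m := IsCyclotomicExtension.zeta_spec m' ℚ K
  set emb : K →ₐ[ℚ] ℂ := IsAlgClosed.lift with hembj
  have hembjinj : Function.Injective emb := emb.toRingHom.injective
  set ζ : ℂ := emb ζK with hζdef
  have hζ : IsPrimitiveRoot ζ m := hζK.map_of_injective hembjinj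
  -- trace functions
  have hex : ∀ g : Equiv.Perm (Fin n), ∃ c : ℕ → ℕ, ∀ k : ℕ,
      LinearMap.trace ℂ V (fV g ^ k) = ∑ j ∈ range m, (c j : ℂ) * ζ ^ (j * k) :=
    fun g => stmt6_trace_pow_eq (fV g) hmpos (hfV_m g) hζ
  choose c hc using hex
  -- dimension
  set d : ℕ := Module.finrank ℂ V with hd
  have hd0 : 0 < d := by
    rw [hd]
    rw [Module.finrank_pos_iff]
    refine ⟨⟨⟨v, hvV⟩, 0, ?_⟩⟩
    intro hcontr
    exact hv0 (by simpa [Submodule.mk_eq_zero] using hcontr)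
  -- A acts on V as μ, and as the sum of the fV s⁻¹
  have hsumA : (∑ s ∈ S, fV s⁻¹) = μ • (1 : Module.End ℂ V) := by
    refine LinearMap.ext fun u => Subtype.ext ?_
    have hcoe : ((∑ s ∈ S, fV s⁻¹) u : Equiv.Perm (Fin n) → ℂ)
        = ∑ s ∈ S, (ρ s⁻¹ (u : Equiv.Perm (Fin n) → ℂ)) := by
      rw [LinearMap.sum_apply]
      push_cast [Submodule.coe_sum]
      rfl
    rw [hcoe]
    funext x
    have h1 : ∀ s : Equiv.Perm (Fin n), (ρ s⁻¹ (u : Equiv.Perm (Fin n) → ℂ)) x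
        = (u : Equiv.Perm (Fin n) → ℂ) (s * x) := by
      intro s
      rw [hρ_apply, inv_inv]
    rw [Finset.sum_apply]
    rw [Finset.sum_congr rfl fun s _ => h1 s]
    have h2 := (hmemV _).mp u.2
    have h3 := (hAct (u : Equiv.Perm (Fin n) → ℂ) x).symm
    rw [h3, h2]
    rfl
  -- main trace identity
  have htrace : μ * d = ∑ s ∈ S, ∑ j ∈ range m, (c s⁻¹ j : ℂ) * ζ ^ j := by
    have h1 : LinearMap.trace ℂ V (μ • (1 : Module.End ℂ V)) = μ * d := by
      rw [map_smul, LinearMap.trace_one, smul_eq_mul]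
    rw [← h1, ← hsumA, map_sum]
    refine Finset.sum_congr rfl fun s _ => ?_
    have h2 := hc s⁻¹ 1
    rw [pow_one] at h2
    rw [h2]
    exact Finset.sum_congr rfl fun j _ => by rw [Nat.mul_one]
  -- the element of K
  set tK : K := ∑ s ∈ S, ∑ j ∈ range m, (c s⁻¹ j : K) * ζK ^ j with htK
  have hembjtK : emb tK = μ * d := by
    rw [htK, map_sum, htrace]
    refine Finset.sum_congr rfl fun s _ => ?_
    rw [map_sum]
    refine Finset.sum_congr rfl fun j _ => ?_
    rw [map_mul, map_pow, map_natCast, ← hζdef]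
  -- Galois-fixedness of tK
  have hfix : ∀ σ : K ≃ₐ[ℚ] K, σ tK = tK := by
    intro σ
    haveI : NeZero m := ⟨hmpos.ne'⟩
    have hσζ : IsPrimitiveRoot (σ ζK) m := hζK.map_of_injective σ.injective
    obtain ⟨k, hk_lt, hkeq⟩ := hζK.eq_pow_of_pow_eq_one hσζ.pow_eq_one
    have hkcop : Nat.Coprime k m := ((hζK.pow_iff_coprime hmpos k).mp (by rw [hkeq]; exact hσζ))
    apply hembjinj
    have hσtK : σ tK = ∑ s ∈ S, ∑ j ∈ range m, (c s⁻¹ j : K) * ζK ^ (j * k) := by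
      rw [htK, map_sum]
      refine Finset.sum_congr rfl fun s _ => ?_
      rw [map_sum]
      refine Finset.sum_congr rfl fun j _ => ?_
      rw [map_mul, map_pow, map_natCast, ← hkeq, ← pow_mul, Nat.mul_comm k j]
    rw [hσtK, hembjtK]
    have hembjσ : emb (∑ s ∈ S, ∑ j ∈ range m, (c s⁻¹ j : K) * ζK ^ (j * k))
        = ∑ s ∈ S, ∑ j ∈ range m, (c s⁻¹ j : ℂ) * ζ ^ (j * k) := by
      rw [map_sum]
      refine Finset.sum_congr rfl fun s _ => ?_
      rw [map_sum]
      refine Finset.sum_congr rfl fun j _ => ?_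
      rw [map_mul, map_pow, map_natCast, ← hζdef]
    rw [hembjσ]
    have hstep : ∀ s : Equiv.Perm (Fin n),
        (∑ j ∈ range m, (c s⁻¹ j : ℂ) * ζ ^ (j * k))
          = LinearMap.trace ℂ V (fV ((s ^ k)⁻¹)) := by
      intro s
      rw [← hc s⁻¹ k, hfV_pow, inv_pow]
    rw [Finset.sum_congr rfl fun s _ => hstep s]
    have hFs : ∀ s : Equiv.Perm (Fin n),
        LinearMap.trace ℂ V (fV (s⁻¹)) = ∑ j ∈ range m, (c s⁻¹ j : ℂ) * ζ ^ j := by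
      intro s
      have h2 := hc s⁻¹ 1
      rw [pow_one] at h2
      rw [h2]
      exact Finset.sum_congr rfl fun j _ => by rw [Nat.mul_one]
    have hB := hbij k hkcop (fun t => LinearMap.trace ℂ V (fV t⁻¹))
    rw [hB]
    rw [Finset.sum_congr rfl fun s _ => hFs s]
    exact htrace.symm
  -- tK is rational
  have hbot : tK ∈ (⊥ : IntermediateField ℚ K) := by
    rw [← IsGalois.fixedField_fixingSubgroup (⊥ : IntermediateField ℚ K)]
    exact fun g => hfix g.1
  obtain ⟨q, hq⟩ := IntermediateField.mem_bot.mp hbot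
  have hμd : μ * d = (q : ℂ) := by
    rw [← hembjtK, ← hq, AlgHom.commutes, eq_ratCast]
  set q' : ℚ := q / d with hq'def
  have hdC : (d : ℂ) ≠ 0 := Nat.cast_ne_zero.mpr hd0.ne'
  have hμq : μ = (q' : ℂ) := by
    rw [hq'def]
    push_cast
    rw [eq_div_iff hdC]
    exact hμd
  -- μ is an algebraic integer
  have hint : IsIntegral ℤ μ := by
    set Aℤ : Matrix (Equiv.Perm (Fin n)) (Equiv.Perm (Fin n)) ℤ :=
      Matrix.of (fun x y : Equiv.Perm (Fin n) => if y * x⁻¹ ∈ S then (1 : ℤ) else 0) with hAZ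
    have hmap : Aℤ.map (algebraMap ℤ ℂ) = A := by
      ext x y
      rw [hAZ, hA]
      simp [Matrix.map_apply, apply_ite]
    refine ⟨Aℤ.charpoly, Aℤ.charpoly_monic, ?_⟩
    show Polynomial.eval₂ (algebraMap ℤ ℂ) μ Aℤ.charpoly = 0
    rw [Polynomial.eval₂_eq_eval_map, ← Matrix.charpoly_map, hmap, Matrix.charpoly, eval_det,
      Matrix.matPolyEquiv_charmatrix, Polynomial.eval_sub, Polynomial.eval_X, Polynomial.eval_C]
    refine (Matrix.exists_mulVec_eq_zero_iff).mp ⟨v, hv0, ?_⟩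
    have hscal : (Matrix.scalar (Equiv.Perm (Fin n)) μ)
        = μ • (1 : Matrix (Equiv.Perm (Fin n)) (Equiv.Perm (Fin n)) ℂ) := by
      ext x y
      by_cases hxy : x = y <;>
        simp [Matrix.scalar, Matrix.diagonal, Matrix.one_apply, hxy]
    rw [Matrix.sub_mulVec, hscal, Matrix.smul_mulVec, Matrix.one_mulVec, hveq, sub_self]
  -- conclude
  have hq'int : IsIntegral ℤ q' := by
    have h1 : algebraMap ℚ ℂ q' = μ := by rw [hμq, eq_ratCast]
    rw [← h1] at hint
    exact (isIntegral_algebraMap_iff ((algebraMap ℚ ℂ).injective)).mp hint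
  obtain ⟨z, hz⟩ := IsIntegrallyClosed.isIntegral_iff.mp hq'int
  refine ⟨z, ?_⟩
  rw [hμq, ← hz]
  push_cast
  rfl
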